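/- arXiv:2203.16226 — 2 statements merged into one kernel-verified Lean document; each statement's English description precedes it below -/
import Mathlib

section
/- Let F be a uniform dill map with local rule f and common image length L = |f|, and let m ∈ ℕ. Then for every n ∈ ℕ, (σ^m ∘ F)^n = σ^{m·Σ_{k=0}^{n−1} L^k} ∘ F^n. Consequently, for all x, y ∈ A^ℕ and n ∈ ℕ, 𝔡_H((σ^m∘F)^n(x), (σ^m∘F)^n(y)) = 𝔡_H(F^n(x), F^n(y)). -/
open Filter

/-- The finite factor `x_[i, i+n)` of the infinite word `x`. -/
def factor {A : Type*} (x : ℕ → A) (i n : ℕ) : List A := List.ofFn (fun k : Fin n => x (i + k))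

/-- The shift map `σ` on infinite words. -/
def shift {A : Type*} (x : ℕ → A) : ℕ → A := fun i => x (i + 1)
/-- The Hamming distance between two finite words (number of mismatching positions). -/
def hammingL {A : Type*} [DecidableEq A] (u v : List A) : ℕ :=
  ((List.range (max u.length v.length)).filter (fun i => u[i]? ≠ v[i]?)).length

/-- The Besicovitch pseudometric `𝔡_H`. -/
noncomputable def besic {A : Type*} [DecidableEq A] (x y : ℕ → A) : ℝ :=
  limsup (fun l : ℕ => (hammingL (factor x 0 l) (factor y 0 l) : ℝ) / l) atTop
/-- The window `x_[i, i+s)` of the infinite word `x`, as an element of `A^s`. -/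
def window {A : Type*} (x : ℕ → A) (i : ℕ) (s : ℕ) : Fin s → A := fun k => x (i + k)

/-- The cocycle `S_n(x) = ∑_{j<n} |f(x_[j,j+s))|` of a local rule `f`. -/
def cocycle {A : Type*} {s : ℕ} (f : (Fin s → A) → List A) (x : ℕ → A) (n : ℕ) : ℕ :=
  ∑ j ∈ Finset.range n, (f (window x j s)).length

/-- `F` is the dill map with local rule `f`: for every `x`, `F x` is the infinite
concatenation `f(x_[0,s)) f(x_[1,1+s)) f(x_[2,2+s)) ⋯`. -/
def IsDillVia {A : Type*} {s : ℕ} (f : (Fin s → A) → List A) (F : (ℕ → A) → ℕ → A) : Prop :=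
  ∀ (x : ℕ → A) (n k : ℕ) (h : k < (f (window x n s)).length),
    F x (cocycle f x n + k) = (f (window x n s)).get ⟨k, h⟩

/-! ### Auxiliary lemmas -/

/-- Number of mismatching positions of `x, y` among the first `l` coordinates. -/
def mism {A : Type*} [DecidableEq A] (x y : ℕ → A) (l : ℕ) : ℕ :=
  (List.range l).countP (fun i => x i ≠ y i)

lemma shift_iter_apply {A : Type*} (x : ℕ → A) (m i : ℕ) : shift^[m] x i = x (i + m) := by
  induction m generalizing x i with
  | zero => simp
  | succ m ih =>
    rw [Function.iterate_succ_apply, ih]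
    simp [shift, Nat.add_assoc]

lemma hammingL_factor {A : Type*} [DecidableEq A] (x y : ℕ → A) (l : ℕ) :
    hammingL (factor x 0 l) (factor y 0 l) = mism x y l := by
  unfold hammingL mism factor
  rw [← List.countP_eq_length_filter, List.length_ofFn, List.length_ofFn, max_self]
  apply List.countP_congr
  intro i hi
  rw [List.mem_range] at hi
  simp [List.getElem?_ofFn, hi]

lemma mism_le {A : Type*} [DecidableEq A] (x y : ℕ → A) (l : ℕ) : mism x y l ≤ l := by
  unfold mism
  simpa using List.countP_le_length (p := fun i => decide (x i ≠ y i)) (l := List.range l)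

lemma mism_add {A : Type*} [DecidableEq A] (x y : ℕ → A) (a b : ℕ) :
    mism x y (a + b) = mism x y a + mism (shift^[a] x) (shift^[a] y) b := by
  unfold mism
  rw [List.range_add, List.countP_append, List.countP_map]
  congr 1
  apply List.countP_congr
  intro i hi
  simp [shift_iter_apply, Function.comp, Nat.add_comm a i]

lemma mism_shift_bounds {A : Type*} [DecidableEq A] (x y : ℕ → A) (j l : ℕ) :
    mism (shift^[j] x) (shift^[j] y) l ≤ mism x y l + j ∧
      mism x y l ≤ mism (shift^[j] x) (shift^[j] y) l + j := by
  have e1 := mism_add x y j l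
  have e2 := mism_add x y l j
  have h1 : mism x y j ≤ j := mism_le x y j
  have h2 : mism (shift^[l] x) (shift^[l] y) j ≤ j := mism_le _ _ j
  rw [Nat.add_comm j l] at e1
  omega

lemma limsup_le_aux (u v : ℕ → ℝ) (h0 : ∀ l, 0 ≤ u l) (hv0 : ∀ l, 0 ≤ v l) (hv1 : ∀ l, v l ≤ 1)
    (h : ∀ ε : ℝ, 0 < ε → ∀ᶠ l in atTop, u l ≤ v l + ε) :
    limsup u atTop ≤ limsup v atTop := by
  refine le_of_forall_pos_le_add fun ε hε => ?_
  have hcu : IsCoboundedUnder (· ≤ ·) atTop u :=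
    (isBoundedUnder_of ⟨0, fun l => h0 l⟩ : IsBoundedUnder (· ≥ ·) atTop u).isCoboundedUnder_le
  have hbv : IsBoundedUnder (· ≤ ·) atTop v := isBoundedUnder_of ⟨1, fun l => hv1 l⟩
  have hcv : IsCoboundedUnder (· ≤ ·) atTop v :=
    (isBoundedUnder_of ⟨0, fun l => hv0 l⟩ : IsBoundedUnder (· ≥ ·) atTop v).isCoboundedUnder_le
  have hb : IsBoundedUnder (· ≤ ·) atTop (fun l => v l + ε) :=
    isBoundedUnder_of ⟨1 + ε, fun l => add_le_add_left (hv1 l) ε⟩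
  calc limsup u atTop ≤ limsup (fun l => v l + ε) atTop := limsup_le_limsup (h ε hε) hcu hb
    _ = limsup v atTop + ε := limsup_add_const atTop v ε hbv hcv

lemma ratio_ev_le (c d : ℕ → ℕ) (j : ℕ)
    (hcd : ∀ l, c l ≤ d l + j) (ε : ℝ) (hε : 0 < ε) :
    ∀ᶠ l in atTop, (c l : ℝ) / l ≤ (d l : ℝ) / l + ε := by
  rw [eventually_atTop]
  refine ⟨⌈(j : ℝ) / ε⌉₊ + 1, fun l hl => ?_⟩
  have hl0 : 0 < (l : ℝ) := by exact_mod_cast Nat.lt_of_lt_of_le (Nat.succ_pos _) hl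
  have hjl : (j : ℝ) / l ≤ ε := by
    rw [div_le_iff₀ hl0]
    have : ((j : ℝ) / ε) ≤ l := le_trans (Nat.le_ceil _) (by exact_mod_cast Nat.le_of_succ_le hl)
    calc (j : ℝ) = (j : ℝ) / ε * ε := by field_simp
      _ ≤ l * ε := by nlinarith
      _ = ε * l := by ring
  calc (c l : ℝ) / l ≤ ((d l : ℝ) + j) / l := by
        apply (div_le_div_iff_of_pos_right hl0).mpr
        exact_mod_cast hcd l
    _ = (d l : ℝ) / l + (j : ℝ) / l := by ring
    _ ≤ (d l : ℝ) / l + ε := by linarith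

/-- The Besicovitch pseudometric is shift-invariant. -/
lemma besic_shift {A : Type*} [DecidableEq A] (j : ℕ) (x y : ℕ → A) :
    besic (shift^[j] x) (shift^[j] y) = besic x y := by
  unfold besic
  simp only [hammingL_factor]
  have key : ∀ (u v : ℕ → A), ∀ l, (mism u v l : ℝ) / l ≤ 1 := by
    intro u v l
    rcases Nat.eq_zero_or_pos l with rfl | hl
    · simp
    · rw [div_le_one (by positivity)]
      exact_mod_cast mism_le u v l
  have nn : ∀ (u v : ℕ → A), ∀ l, (0:ℝ) ≤ (mism u v l : ℝ) / l := fun u v l => by positivity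
  apply le_antisymm
  · exact limsup_le_aux (fun l => (mism (shift^[j] x) (shift^[j] y) l : ℝ) / l)
      (fun l => (mism x y l : ℝ) / l) (nn _ _) (nn x y) (key x y)
      (fun ε hε => ratio_ev_le (mism (shift^[j] x) (shift^[j] y)) (mism x y) j
        (fun l => (mism_shift_bounds x y j l).1) ε hε)
  · exact limsup_le_aux (fun l => (mism x y l : ℝ) / l)
      (fun l => (mism (shift^[j] x) (shift^[j] y) l : ℝ) / l) (nn x y) (nn _ _) (key _ _)
      (fun ε hε => ratio_ev_le (mism x y) (mism (shift^[j] x) (shift^[j] y)) j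
        (fun l => (mism_shift_bounds x y j l).2) ε hε)

section dill
variable {A : Type*} {s L : ℕ} (hL : 1 ≤ L) (f : (Fin s → A) → List A)
  (hunif : ∀ u, (f u).length = L) (F : (ℕ → A) → ℕ → A) (hF : IsDillVia f F)

include hunif in
lemma cocycle_unif (x : ℕ → A) (n : ℕ) : cocycle f x n = n * L := by
  simp [cocycle, hunif, mul_comm]

include hunif hF in
lemma F_apply (x : ℕ → A) (n k : ℕ) (h : k < L) :
    F x (n * L + k) = (f (window x n s)).get ⟨k, by rw [hunif]; exact h⟩ := by
  have h' := hF x n k (by rw [hunif]; exact h)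
  rwa [cocycle_unif f hunif] at h'

lemma window_shift (x : ℕ → A) (n m : ℕ) : window (shift^[m] x) n s = window x (n + m) s := by
  funext k
  simp only [window, shift_iter_apply]
  congr 1
  omega

include hL hunif hF in
lemma F_shift (m : ℕ) (x : ℕ → A) : F (shift^[m] x) = shift^[m * L] (F x) := by
  funext p
  obtain ⟨n, k, hk, rfl⟩ : ∃ n k, k < L ∧ p = n * L + k :=
    ⟨p / L, p % L, Nat.mod_lt _ hL, (Nat.div_add_mod' p L).symm⟩
  rw [shift_iter_apply, F_apply f hunif F hF _ n k hk,
    show n * L + k + m * L = (n + m) * L + k by ring,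
    F_apply f hunif F hF _ (n + m) k hk, window_shift]

include hL hunif hF in
lemma F_iter_shift (n j : ℕ) (x : ℕ → A) :
    F^[n] (shift^[j] x) = shift^[j * L ^ n] (F^[n] x) := by
  induction n generalizing j x with
  | zero => simp
  | succ n ih =>
    rw [Function.iterate_succ_apply, Function.iterate_succ_apply,
      F_shift hL f hunif F hF, ih, show j * L * L ^ n = j * L ^ (n + 1) by ring]

include hL hunif hF in
lemma dill_part1 (m : ℕ) (n : ℕ) :
    (shift^[m] ∘ F)^[n] = shift^[m * ∑ k ∈ Finset.range n, L ^ k] ∘ F^[n] := by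
  induction n with
  | zero => simp
  | succ n ih =>
    funext x
    rw [Function.iterate_succ_apply, ih]
    simp only [Function.comp_apply]
    rw [F_iter_shift hL f hunif F hF n m (F x),
      ← Function.iterate_add_apply shift,
      ← Function.iterate_succ_apply F n x,
      show m * (∑ k ∈ Finset.range n, L ^ k) + m * L ^ n
          = m * ∑ k ∈ Finset.range (n + 1), L ^ k by
        rw [Finset.sum_range_succ]; ring]
end dill

/-- For a uniform dill map `F` with common image length `L` and `m ∈ ℕ`:
`(σ^m ∘ F)^n = σ^{m·∑_{k<n} L^k} ∘ F^n`, and consequently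
`𝔡_H((σ^m∘F)^n(x), (σ^m∘F)^n(y)) = 𝔡_H(F^n(x), F^n(y))` for all `x, y, n`. -/
theorem uniform_dill_shift_compose {A : Type*} [DecidableEq A]
    (s L : ℕ) (hs : 1 ≤ s) (hL : 1 ≤ L)
    (f : (Fin s → A) → List A) (hunif : ∀ u, (f u).length = L)
    (F : (ℕ → A) → ℕ → A) (hF : IsDillVia f F) (m : ℕ) :
    (∀ n : ℕ, (shift^[m] ∘ F)^[n] = shift^[m * ∑ k ∈ Finset.range n, L ^ k] ∘ F^[n]) ∧
      (∀ (x y : ℕ → A) (n : ℕ),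
        besic ((shift^[m] ∘ F)^[n] x) ((shift^[m] ∘ F)^[n] y) =
          besic (F^[n] x) (F^[n] y)) := by
  refine ⟨dill_part1 hL f hunif F hF m, fun x y n => ?_⟩
  rw [dill_part1 hL f hunif F hF m n]
  simp only [Function.comp_apply]
  exact besic_shift _ _ _
end

section
/- Let F be a cellular automaton with diameter s over A^ℕ via local rule f, and let u ∈ A^s. If 𝔡_L(u^∞, F(u^∞)) = 0, then there exists k ∈ {0, 1, …, s−1} such that F(u^∞) = σ^k(u^∞), where u^∞ denotes the periodic infinite word u u u ⋯. -/
open Filter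

/-- The maximal length of a common (not necessarily contiguous) subsequence of `u` and `v`. -/
noncomputable def lcs {A : Type*} (u v : List A) : ℕ :=
  sSup {n | ∃ w : List A, w.length = n ∧ w.Sublist u ∧ w.Sublist v}

/-- The (halved) Levenshtein distance `d_L(u,v) = (|u|+|v|)/2 - ℓ(u,v)`. -/
noncomputable def levD {A : Type*} (u v : List A) : ℝ :=
  ((u.length : ℝ) + v.length) / 2 - lcs u v

/-- The Feldman pseudometric `𝔡_L`. -/
noncomputable def feld {A : Type*} (x y : ℕ → A) : ℝ :=
  limsup (fun l : ℕ => levD (factor x 0 l) (factor y 0 l) / l) atTop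

/-- The `s`-periodic infinite word `u^∞` determined by `u ∈ A^s`. -/
def perWord {A : Type*} {s : ℕ} (hs : 0 < s) (u : Fin s → A) : ℕ → A :=
  fun i => u ⟨i % s, Nat.mod_lt i hs⟩

lemma factor_length {A : Type*} (x : ℕ → A) (i n : ℕ) : (factor x i n).length = n := by
  simp [factor]

lemma factor_get {A : Type*} (x : ℕ → A) (n : ℕ) (q : Fin (factor x 0 n).length) :
    (factor x 0 n).get q = x q.val := by
  rw [List.get_eq_getElem]
  simp [factor, List.get_ofFn]

lemma lcs_spec {A : Type*} (u v : List A) :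
    ∃ w : List A, w.length = lcs u v ∧ w.Sublist u ∧ w.Sublist v := by
  have hne : {n | ∃ w : List A, w.length = n ∧ w.Sublist u ∧ w.Sublist v}.Nonempty :=
    ⟨0, [], rfl, List.nil_sublist _, List.nil_sublist _⟩
  have hbdd : BddAbove {n | ∃ w : List A, w.length = n ∧ w.Sublist u ∧ w.Sublist v} :=
    ⟨u.length, fun n hn => by obtain ⟨w, hw, hwu, -⟩ := hn; exact hw ▸ hwu.length_le⟩
  exact Nat.sSup_mem hne hbdd

lemma counting {A : Type*} (s : ℕ) (hs : 0 < s) (x y : ℕ → A)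
    (av : ℕ → ℕ) (hav : ∀ k, k < s → av k < s)
    (hpair : ∀ i j : ℕ, x i = y j → j % s ≠ av ((((i : ℤ) - (j : ℤ)) % (s : ℤ)).toNat))
    (L m : ℕ) (I J : ℕ → ℕ)
    (hIm : ∀ t, t + 1 < m → I t < I (t + 1)) (hJm : ∀ t, t + 1 < m → J t < J (t + 1))
    (hIb : ∀ t, t < m → I t < L) (hJb : ∀ t, t < m → J t < L)
    (hmatch : ∀ t, t < m → x (I t) = y (J t)) :
    (L : ℤ) + 1 - s ≤ (2 * s - 1) * ((L : ℤ) - m) := by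
  classical
  rcases Nat.eq_zero_or_pos m with hm | hm
  · subst hm
    have hs' : (1 : ℤ) ≤ (s : ℤ) := by exact_mod_cast hs
    have hL : (0 : ℤ) ≤ (L : ℤ) := Int.ofNat_nonneg L
    push_cast
    nlinarith
  obtain ⟨n, rfl⟩ : ∃ n, m = n + 1 := ⟨m - 1, by omega⟩
  set c : ℕ → ℤ := fun t => ((I (t + 1) : ℤ) - I t - 1) + ((J (t + 1) : ℤ) - J t - 1) with hc
  -- basic positivity of c on range n
  have hc0 : ∀ t, t + 1 < n + 1 → 0 ≤ c t := by
    intro t ht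
    have h1 := hIm t ht
    have h2 := hJm t ht
    simp only [hc]
    omega
  -- telescoping bound on the sum
  have hIt : ∀ t, t < n + 1 → t ≤ I t := by
    intro t
    induction t with
    | zero => intro _; exact Nat.zero_le _
    | succ t ih =>
      intro h
      have h1 := hIm t h
      have h2 := ih (by omega)
      omega
  have hnl : n + 1 ≤ L := by
    have h1 := hIb n (by omega)
    have h2 := hIt n (by omega)
    omega
  have hsum : ∑ t ∈ Finset.range n, c t ≤ 2 * ((L : ℤ) - (n + 1)) := by
    have e1 : ∑ t ∈ Finset.range n, ((I (t + 1) : ℤ) - I t) = (I n : ℤ) - I 0 :=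
      Finset.sum_range_sub (fun t => (I t : ℤ)) n
    have e2 : ∑ t ∈ Finset.range n, ((J (t + 1) : ℤ) - J t) = (J n : ℤ) - J 0 :=
      Finset.sum_range_sub (fun t => (J t : ℤ)) n
    have e3 : ∑ t ∈ Finset.range n, c t
        = (∑ t ∈ Finset.range n, ((I (t + 1) : ℤ) - I t))
          + (∑ t ∈ Finset.range n, ((J (t + 1) : ℤ) - J t)) - 2 * n := by
      rw [← Finset.sum_add_distrib]
      rw [show (2 : ℤ) * n = ∑ _t ∈ Finset.range n, (2 : ℤ) by
        rw [Finset.sum_const, Finset.card_range]; ring]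
      rw [← Finset.sum_sub_distrib]
      apply Finset.sum_congr rfl
      intro t _
      simp only [hc]; ring
    rw [e3, e1, e2]
    have h1 := hIb n (by omega)
    have h2 := hJb n (by omega)
    omega
  -- the window lemma
  have hwin : ∀ t, t + s ≤ n + 1 → ∃ t', t' ∈ Finset.Ico t (t + s - 1) ∧ 1 ≤ c t' := by
    intro t ht
    by_contra hcontra
    push_neg at hcontra
    have ind : ∀ e, e < s → I (t + e) = I t + e ∧ J (t + e) = J t + e := by
      intro e he
      induction e with
      | zero => simp
      | succ e ih =>
        obtain ⟨hI', hJ'⟩ := ih (by omega)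
        have hmem : t + e ∈ Finset.Ico t (t + s - 1) := by
          simp only [Finset.mem_Ico]; omega
        have hcm := hcontra _ hmem
        have h1 := hIm (t + e) (by omega)
        have h2 := hJm (t + e) (by omega)
        simp only [hc] at hcm
        have hre : t + (e + 1) = t + e + 1 := rfl
        rw [hre]
        omega
    -- now derive a contradiction from hpair
    set i := I t with hi
    set j := J t with hj
    set k : ℕ := (((i : ℤ) - (j : ℤ)) % (s : ℤ)).toNat with hk
    have hsz : (s : ℤ) ≠ 0 := by exact_mod_cast hs.ne'
    have hnn : 0 ≤ ((i : ℤ) - j) % s := Int.emod_nonneg _ hsz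
    have hlt : ((i : ℤ) - j) % s < s := Int.emod_lt_of_pos _ (by exact_mod_cast hs)
    have hks : k < s := by omega
    have havk := hav k hks
    set e := (av k + s - j % s) % s with he
    have hes : e < s := Nat.mod_lt _ hs
    obtain ⟨hIe, hJe⟩ := ind e hes
    have hmatch' := hmatch (t + e) (by omega)
    rw [hIe, hJe] at hmatch'
    have hp := hpair (i + e) (j + e) hmatch'
    apply hp
    have harg : ((i + e : ℕ) : ℤ) - ((j + e : ℕ) : ℤ) = (i : ℤ) - j := by push_cast; ring
    rw [harg]
    rw [← hk]
    -- goal : (j + e) % s = av k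
    have hjs : j % s < s := Nat.mod_lt _ hs
    calc (j + e) % s = (j % s + e % s) % s := by rw [Nat.add_mod]
      _ = (j % s + e) % s := by rw [Nat.mod_eq_of_lt hes]
      _ = (j % s + (av k + s - j % s)) % s := by rw [he, Nat.add_mod_mod]
      _ = (av k + s) % s := by congr 1; omega
      _ = av k % s := Nat.add_mod_right _ _
      _ = av k := Nat.mod_eq_of_lt havk
  -- choose the witnesses
  have hchoice : ∀ t : ℕ, ∃ t', t + s ≤ n + 1 → t' ∈ Finset.Ico t (t + s - 1) ∧ 1 ≤ c t' := by
    intro t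
    by_cases hcase : t + s ≤ n + 1
    · obtain ⟨t', h1, h2⟩ := hwin t hcase
      exact ⟨t', fun _ => ⟨h1, h2⟩⟩
    · exact ⟨0, fun hh => absurd hh hcase⟩
  choose v hv using hchoice
  set W : Finset ℕ := Finset.range (n + 2 - s) with hWdef
  have hWmem : ∀ t ∈ W, t + s ≤ n + 1 := by
    intro t ht
    simp only [hWdef, Finset.mem_range] at ht
    omega
  set B : Finset ℕ := W.image v with hBdef
  have hcard1 : W.card ≤ (s - 1) * B.card := by
    apply Finset.card_le_mul_card_image
    intro b _
    have hsub : {a ∈ W | v a = b} ⊆ Finset.Ico (b + 2 - s) (b + 1) := by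
      intro t ht
      simp only [Finset.mem_filter] at ht
      obtain ⟨htW, hvt⟩ := ht
      have h1 := (hv t (hWmem t htW)).1
      simp only [Finset.mem_Ico] at h1
      simp only [Finset.mem_Ico]
      omega
    calc ({a ∈ W | v a = b}).card ≤ (Finset.Ico (b + 2 - s) (b + 1)).card :=
          Finset.card_le_card hsub
      _ = (b + 1) - (b + 2 - s) := Nat.card_Ico _ _
      _ ≤ s - 1 := by omega
  have hBsub : B ⊆ Finset.range n := by
    intro b hb
    simp only [hBdef, Finset.mem_image] at hb
    obtain ⟨t, htW, rfl⟩ := hb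
    have h1 := (hv t (hWmem t htW)).1
    have h2 := hWmem t htW
    simp only [Finset.mem_Ico] at h1
    simp only [Finset.mem_range]
    omega
  have hB1 : ∀ b ∈ B, (1 : ℤ) ≤ c b := by
    intro b hb
    simp only [hBdef, Finset.mem_image] at hb
    obtain ⟨t, htW, rfl⟩ := hb
    exact (hv t (hWmem t htW)).2
  have hBcard : (B.card : ℤ) ≤ 2 * ((L : ℤ) - (n + 1)) := by
    calc (B.card : ℤ) = ∑ _t ∈ B, (1 : ℤ) := by simp
      _ ≤ ∑ t ∈ B, c t := Finset.sum_le_sum hB1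
      _ ≤ ∑ t ∈ Finset.range n, c t := by
          apply Finset.sum_le_sum_of_subset_of_nonneg hBsub
          intro t ht _
          exact hc0 t (by simp only [Finset.mem_range] at ht; omega)
      _ ≤ 2 * ((L : ℤ) - (n + 1)) := hsum
  have hWB : (n : ℤ) + 2 - s ≤ ((s : ℤ) - 1) * B.card := by
    have h2 : W.card = n + 2 - s := by rw [hWdef, Finset.card_range]
    have h1 : ((n + 2 - s : ℕ) : ℤ) ≤ ((s - 1 : ℕ) : ℤ) * (B.card : ℤ) := by
      rw [← h2]; exact_mod_cast hcard1
    have h3 : ((s - 1 : ℕ) : ℤ) = (s : ℤ) - 1 := by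
      have : 1 ≤ s := hs
      push_cast [this]; ring
    have h4 : (n : ℤ) + 2 - s ≤ ((n + 2 - s : ℕ) : ℤ) := by omega
    rw [h3] at h1
    linarith
  -- combine
  set D : ℤ := (L : ℤ) - (n + 1) with hD
  have hD0 : 0 ≤ D := by omega
  have hmul : ((s : ℤ) - 1) * (B.card : ℤ) ≤ ((s : ℤ) - 1) * (2 * D) := by
    apply mul_le_mul_of_nonneg_left hBcard
    have : 1 ≤ s := hs
    omega
  have hexp : ((s : ℤ) - 1) * (2 * D) = (2 * (s : ℤ) - 1) * ((L : ℤ) - ((n : ℤ) + 1)) - D := by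
    rw [hD]; ring
  push_cast
  linarith

lemma shift_iterate {A : Type*} (k : ℕ) (z : ℕ → A) (i : ℕ) :
    (shift^[k] z) i = z (i + k) := by
  induction k generalizing z i with
  | zero => rfl
  | succ k ih =>
    rw [Function.iterate_succ_apply, ih (shift z) i]
    rfl


/-- Let `F` be a CA with diameter `s` and local rule `f`, and `u ∈ A^s`.
If `𝔡_L(u^∞, F(u^∞)) = 0` then `F(u^∞) = σ^k(u^∞)` for some `k < s`. -/
theorem ca_feld_periodic_shift {A : Type*} (s : ℕ) (hs : 0 < s)
    (f : (Fin s → A) → A) (F : (ℕ → A) → ℕ → A)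
    (hF : ∀ (x : ℕ → A) (i : ℕ), F x i = f (fun k => x (i + k)))
    (u : Fin s → A) (h : feld (perWord hs u) (F (perWord hs u)) = 0) :
    ∃ k < s, F (perWord hs u) = shift^[k] (perWord hs u) := by
  classical
  by_contra hcon
  push_neg at hcon
  set x : ℕ → A := perWord hs u with hx
  set y : ℕ → A := F x with hy
  have xcong : ∀ {n m : ℕ}, n % s = m % s → x n = x m := by
    intro n m hnm
    show perWord hs u n = perWord hs u m
    unfold perWord
    exact congrArg u (Fin.mk_eq_mk.mpr hnm)
  have ycong : ∀ {n m : ℕ}, n % s = m % s → y n = y m := by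
    intro n m hnm
    show F x n = F x m
    rw [hF, hF]
    congr 1
    funext k
    exact xcong (by rw [Nat.add_mod n k, Nat.add_mod m k, hnm])
  -- bad witnesses
  have hbad : ∀ k : ℕ, ∃ a : ℕ, k < s → a < s ∧ y a ≠ x (a + k) := by
    intro k
    by_cases hk : k < s
    · have hne := hcon k hk
      have hex : ∃ n, y n ≠ x (n + k) := by
        by_contra hc
        push_neg at hc
        exact hne (funext fun i => by rw [shift_iterate]; exact hc i)
      obtain ⟨n, hn⟩ := hex
      refine ⟨n % s, fun _ => ⟨Nat.mod_lt _ hs, fun hEq => hn ?_⟩⟩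
      calc y n = y (n % s) := ycong (Nat.mod_mod_of_dvd n dvd_rfl).symm
        _ = x (n % s + k) := hEq
        _ = x (n + k) := xcong (Nat.mod_add_mod n s k)
    · exact ⟨0, fun hk' => absurd hk' hk⟩
  choose av hav using hbad
  have hpair : ∀ i j : ℕ, x i = y j → j % s ≠ av ((((i : ℤ) - (j : ℤ)) % (s : ℤ)).toNat) := by
    intro i j hxy hEq
    set k : ℕ := (((i : ℤ) - (j : ℤ)) % (s : ℤ)).toNat with hk
    have hsz : (s : ℤ) ≠ 0 := by exact_mod_cast hs.ne'
    have hnn : 0 ≤ ((i : ℤ) - j) % s := Int.emod_nonneg _ hsz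
    have hlt : ((i : ℤ) - j) % s < s := Int.emod_lt_of_pos _ (by exact_mod_cast hs)
    have hks : k < s := by omega
    obtain ⟨hav1, hav2⟩ := hav k hks
    apply hav2
    have hkz : (k : ℤ) = ((i : ℤ) - j) % s := Int.toNat_of_nonneg hnn
    have hmodz : (((j + k) % s : ℕ) : ℤ) = ((i % s : ℕ) : ℤ) := by
      rw [Int.natCast_mod, Int.natCast_mod]
      push_cast
      rw [hkz, Int.add_emod, Int.emod_emod_of_dvd _ dvd_rfl, ← Int.add_emod]
      congr 1
      ring
    have hmod : (j + k) % s = i % s := by exact_mod_cast hmodz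
    calc y (av k) = y (j % s) := by rw [hEq]
      _ = y j := ycong (Nat.mod_mod_of_dvd j dvd_rfl)
      _ = x i := hxy.symm
      _ = x (j % s + k) := xcong (by rw [Nat.mod_add_mod, hmod])
      _ = x (av k + k) := by rw [hEq]
  -- key lower bound
  have key : ∀ L : ℕ, 2 * s ≤ L →
      (1 : ℝ) / (2 * (2 * (s : ℝ) - 1)) ≤ levD (factor x 0 L) (factor y 0 L) / L := by
    intro L hL
    obtain ⟨w, hwlen, hwx, hwy⟩ := lcs_spec (factor x 0 L) (factor y 0 L)
    obtain ⟨φ, hφ⟩ := List.sublist_iff_exists_fin_orderEmbedding_get_eq.mp hwx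
    obtain ⟨ψ, hψ⟩ := List.sublist_iff_exists_fin_orderEmbedding_get_eq.mp hwy
    set I : ℕ → ℕ := fun t => if ht : t < w.length then ((φ ⟨t, ht⟩ : Fin _) : ℕ) else 0 with hI
    set J : ℕ → ℕ := fun t => if ht : t < w.length then ((ψ ⟨t, ht⟩ : Fin _) : ℕ) else 0 with hJ
    have hIm : ∀ t, t + 1 < w.length → I t < I (t + 1) := by
      intro t ht
      simp only [hI, dif_pos (by omega : t < w.length), dif_pos ht]
      exact φ.strictMono (by simp [Fin.lt_def])
    have hJm : ∀ t, t + 1 < w.length → J t < J (t + 1) := by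
      intro t ht
      simp only [hJ, dif_pos (by omega : t < w.length), dif_pos ht]
      exact ψ.strictMono (by simp [Fin.lt_def])
    have hIb : ∀ t, t < w.length → I t < L := by
      intro t ht
      simp only [hI, dif_pos ht]
      exact lt_of_lt_of_eq (φ ⟨t, ht⟩).isLt (factor_length x 0 L)
    have hJb : ∀ t, t < w.length → J t < L := by
      intro t ht
      simp only [hJ, dif_pos ht]
      exact lt_of_lt_of_eq (ψ ⟨t, ht⟩).isLt (factor_length y 0 L)
    have hmatch : ∀ t, t < w.length → x (I t) = y (J t) := by
      intro t ht
      simp only [hI, hJ, dif_pos ht]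
      rw [← factor_get x L (φ ⟨t, ht⟩), ← factor_get y L (ψ ⟨t, ht⟩), ← hφ ⟨t, ht⟩, ← hψ ⟨t, ht⟩]
    have hcount := counting s hs x y av (fun k hk => (hav k hk).1) hpair L w.length I J
      hIm hJm hIb hJb hmatch
    -- convert to reals
    have hmL : w.length ≤ L := by
      have h0 := hwx.length_le
      rwa [factor_length] at h0
    have hlev : levD (factor x 0 L) (factor y 0 L) = (L : ℝ) - w.length := by
      rw [levD, factor_length, factor_length, ← hwlen]
      ring
    rw [hlev]
    have hSr : (1 : ℝ) ≤ (s : ℝ) := by exact_mod_cast hs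
    have hLr : 2 * (s : ℝ) ≤ (L : ℝ) := by exact_mod_cast hL
    have hMr : (w.length : ℝ) ≤ (L : ℝ) := by exact_mod_cast hmL
    have hcr : (L : ℝ) + 1 - s ≤ (2 * s - 1) * ((L : ℝ) - w.length) := by exact_mod_cast hcount
    have hLpos : (0 : ℝ) < L := by linarith
    have hden : (0 : ℝ) < 2 * (2 * (s : ℝ) - 1) := by linarith
    rw [div_le_div_iff₀ hden hLpos]
    nlinarith
  -- contradiction with feld = 0
  have hfreq : ∃ᶠ L in atTop, (1 : ℝ) / (2 * (2 * (s : ℝ) - 1)) ≤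
      (fun l : ℕ => levD (factor x 0 l) (factor y 0 l) / l) L :=
    (eventually_atTop.mpr ⟨2 * s, key⟩).frequently
  have hub : IsBoundedUnder (· ≤ ·) atTop (fun l : ℕ => levD (factor x 0 l) (factor y 0 l) / l) := by
    refine isBoundedUnder_of ⟨1, fun l => ?_⟩
    rcases Nat.eq_zero_or_pos l with h0 | h0
    · subst h0
      simp
    · have h1 : levD (factor x 0 l) (factor y 0 l) ≤ l := by
        rw [levD, factor_length, factor_length]
        have : (0 : ℝ) ≤ (lcs (factor x 0 l) (factor y 0 l) : ℝ) := by positivity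
        linarith
      have h2 : (0 : ℝ) < l := by exact_mod_cast h0
      rw [div_le_one h2]
      exact h1
  have hle := le_limsup_of_frequently_le hfreq hub
  have hfeld : feld x y = limsup (fun l : ℕ => levD (factor x 0 l) (factor y 0 l) / l) atTop := rfl
  rw [← hfeld, h] at hle
  have hSr : (1 : ℝ) ≤ (s : ℝ) := by exact_mod_cast hs
  have : (0 : ℝ) < 1 / (2 * (2 * (s : ℝ) - 1)) := by
    apply div_pos one_pos
    linarith
  linarith
end
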